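/- Let A be an abelian group and θ an endomorphism of A such that colim(A →θ A →θ ⋯) is a ℤ[1/ℓ]-module (i.e. ℓ acts invertibly on the colimit) and the induced map θ[1/ℓ] on A[1/ℓ] is an automorphism. Then colim_θ A ≅ A[1/ℓ] compatibly with the canonical maps from A. -/

import Mathlib

open TensorProduct

noncomputable section

/-- `ℤ[1/ℓ]`. -/
abbrev Zloc (ℓ : ℤ) : Type := Localization.Away ℓ

/-- `A[1/ℓ] = ℤ[1/ℓ] ⊗_ℤ A`. -/
abbrev loc (ℓ : ℤ) (A : Type) [AddCommGroup A] : Type := Zloc ℓ ⊗[ℤ] A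

/-- The map `A → A[1/ℓ]`, `a ↦ 1 ⊗ a`. -/
def toLoc (ℓ : ℤ) (A : Type) [AddCommGroup A] : A →+ loc ℓ A :=
  ((TensorProduct.mk ℤ (Zloc ℓ) A) 1).toAddMonoidHom

/-- The induced endomorphism `θ[1/ℓ]` of `A[1/ℓ]`. -/
def locMap (ℓ : ℤ) {A : Type} [AddCommGroup A] (θ : A →+ A) : loc ℓ A →+ loc ℓ A :=
  (LinearMap.lTensor (Zloc ℓ) θ.toIntLinearMap).toAddMonoidHom

/-- The sequential colimit of `A → A → A → ⋯` along `θ`. -/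
abbrev seqColim {A : Type} [AddCommGroup A] (θ : A →+ A) : Type :=
  AddCommGroup.DirectLimit (fun _ : ℕ => A)
    (fun i j _ => @id (A →+ A) ((show AddMonoid.End A from θ) ^ (j - i)))

/-- The canonical map `A → colim_θ A` (at stage 0). -/
def seqColimOf {A : Type} [AddCommGroup A] (θ : A →+ A) : A →+ seqColim θ :=
  AddCommGroup.DirectLimit.of (fun _ : ℕ => A)
    (fun i j _ => @id (A →+ A) ((show AddMonoid.End A from θ) ^ (j - i))) 0

section Aux

variable {A : Type} [AddCommGroup A] (ℓ : ℤ) (θ : A →+ A)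

lemma locMap_toLoc (a : A) : locMap ℓ θ (toLoc ℓ A a) = toLoc ℓ A (θ a) := by
  simp [locMap, toLoc]

/-- Multiplication by `r ∈ ℤ[1/ℓ]` on the localized module, as a `ℤ`-linear map. -/
def smulByLM (r : Zloc ℓ) :
    LocalizedModule (Submonoid.powers ℓ) A →ₗ[ℤ] LocalizedModule (Submonoid.powers ℓ) A where
  toFun x := r • x
  map_add' := fun x y => smul_add r x y
  map_smul' n x := by
    simp only [RingHom.id_apply]
    rw [← Int.cast_smul_eq_zsmul (Zloc ℓ) n x, ← mul_smul, mul_comm, mul_smul,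
      Int.cast_smul_eq_zsmul]

/-- The canonical comparison map `ℤ[1/ℓ] ⊗ A → A[powers ℓ⁻¹]`. -/
def cmpLoc : loc ℓ A →ₗ[ℤ] LocalizedModule (Submonoid.powers ℓ) A :=
  TensorProduct.lift
    { toFun := fun r => (smulByLM ℓ r).comp
        (LocalizedModule.mkLinearMap (Submonoid.powers ℓ) A).toAddMonoidHom.toIntLinearMap
      map_add' := fun r s => by
        ext a
        exact add_smul (M := LocalizedModule (Submonoid.powers ℓ) A) r s
          (LocalizedModule.mk a 1 : LocalizedModule (Submonoid.powers ℓ) A)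
      map_smul' := fun n r => by
        ext a
        simp only [RingHom.id_apply, LinearMap.coe_comp, Function.comp_apply,
          LinearMap.smul_apply]
        simp only [smulByLM, LinearMap.coe_mk, AddHom.coe_mk]
        rw [show (n • r) = ((n : ℤ) : Zloc ℓ) * r by rw [zsmul_eq_mul]]
        exact (mul_smul (β := LocalizedModule (Submonoid.powers ℓ) A) _ r _).trans
          (Int.cast_smul_eq_zsmul (Zloc ℓ) n _) }

lemma cmpLoc_toLoc (a : A) :
    cmpLoc ℓ (toLoc ℓ A a) = LocalizedModule.mk a 1 := by
  show cmpLoc ℓ ((1 : Zloc ℓ) ⊗ₜ[ℤ] a) = LocalizedModule.mk a 1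
  simp only [cmpLoc, TensorProduct.lift.tmul]
  simp only [smulByLM, LinearMap.coe_mk, AddHom.coe_mk, LinearMap.coe_comp, Function.comp_apply]
  exact one_smul (α := LocalizedModule (Submonoid.powers ℓ) A) (Zloc ℓ) (LocalizedModule.mk a 1)

/-- The kernel of `A → A[1/ℓ]` is `ℓ`-power torsion. -/
lemma toLoc_eq_zero {a : A} (h : toLoc ℓ A a = 0) : ∃ k : ℕ, (ℓ ^ k : ℤ) • a = 0 := by
  have h0 : LocalizedModule.mk (S := Submonoid.powers ℓ) a 1 = LocalizedModule.mk 0 1 := by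
    rw [LocalizedModule.zero_mk, ← cmpLoc_toLoc ℓ a, h, map_zero]
  obtain ⟨⟨u, k, hk⟩, hu⟩ := LocalizedModule.mk_eq.mp h0
  refine ⟨k, ?_⟩
  simp only [one_smul, smul_zero, Submonoid.mk_smul] at hu
  subst hk
  exact hu

lemma intCast_zloc (z : ℤ) : ((z : ℤ) : Zloc ℓ) = algebraMap ℤ (Zloc ℓ) z := by
  rw [eq_intCast (algebraMap ℤ (Zloc ℓ)) z]

/-- Every element of `A[1/ℓ]` is `a / ℓᵏ` for some `a`, `k`. -/
lemma exists_pow_smul_eq_toLoc (y : loc ℓ A) :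
    ∃ (k : ℕ) (a : A), (ℓ ^ k : ℤ) • y = toLoc ℓ A a := by
  induction y using TensorProduct.induction_on with
  | zero => exact ⟨0, 0, by simp⟩
  | tmul r a =>
      induction r using Localization.induction_on with
      | H p =>
        obtain ⟨n, s⟩ := p
        obtain ⟨k, hk⟩ := s.2
        dsimp only
        refine ⟨k, n • a, ?_⟩
        have hmul : ((ℓ ^ k : ℤ) : Zloc ℓ) * Localization.mk n s = ((n : ℤ) : Zloc ℓ) := by
          rw [intCast_zloc, intCast_zloc, ← Localization.mk_one_eq_algebraMap,
            ← Localization.mk_one_eq_algebraMap, Localization.mk_mul, one_mul,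
            Localization.mk_eq_mk_iff, Localization.r_iff_exists]
          refine ⟨1, ?_⟩
          simp only [Submonoid.coe_one, one_mul, ← hk]
        calc (ℓ ^ k : ℤ) • (Localization.mk n s ⊗ₜ[ℤ] a)
            = ((ℓ ^ k : ℤ) : Zloc ℓ) • (Localization.mk n s ⊗ₜ[ℤ] a) :=
              (Int.cast_smul_eq_zsmul _ _ _).symm
          _ = (((ℓ ^ k : ℤ) : Zloc ℓ) * Localization.mk n s) ⊗ₜ[ℤ] a := by
              rw [TensorProduct.smul_tmul', smul_eq_mul]
          _ = (((n : ℤ) : Zloc ℓ) * (1 : Zloc ℓ)) ⊗ₜ[ℤ] a := by rw [hmul, mul_one]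
          _ = ((n : ℤ) : Zloc ℓ) • ((1 : Zloc ℓ) ⊗ₜ[ℤ] a) := by
              rw [TensorProduct.smul_tmul', smul_eq_mul]
          _ = (n : ℤ) • ((1 : Zloc ℓ) ⊗ₜ[ℤ] a) := Int.cast_smul_eq_zsmul _ _ _
          _ = toLoc ℓ A (n • a) := by
              rw [show ((1 : Zloc ℓ) ⊗ₜ[ℤ] a) = toLoc ℓ A a from rfl, ← map_zsmul]
  | add x y hx hy =>
      obtain ⟨k₁, a₁, h₁⟩ := hx
      obtain ⟨k₂, a₂, h₂⟩ := hy
      refine ⟨k₁ + k₂, (ℓ ^ k₂ : ℤ) • a₁ + (ℓ ^ k₁ : ℤ) • a₂, ?_⟩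
      rw [smul_add, map_add, map_zsmul, map_zsmul, ← h₁, ← h₂]
      rw [← smul_assoc, ← smul_assoc]
      congr 1 <;> rw [smul_eq_mul, ← pow_add] <;> ring_nf

/-- `ℓ` acts invertibly on `ℤ[1/ℓ] ⊗ A`. -/
lemma pow_smul_injective_loc (k : ℕ) :
    Function.Injective (fun y : loc ℓ A => (ℓ ^ k : ℤ) • y) := by
  intro y₁ y₂ h
  have hunit : IsUnit (((ℓ ^ k : ℤ) : Zloc ℓ)) := by
    have h2 := IsLocalization.map_units (M := Submonoid.powers ℓ) (Zloc ℓ) ⟨ℓ ^ k, k, rfl⟩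
    rw [eq_intCast (algebraMap ℤ (Zloc ℓ))] at h2
    exact h2
  have h' : ((ℓ ^ k : ℤ) : Zloc ℓ) • y₁ = ((ℓ ^ k : ℤ) : Zloc ℓ) • y₂ := by
    rw [Int.cast_smul_eq_zsmul, Int.cast_smul_eq_zsmul]; exact h
  exact (IsUnit.smul_left_cancel hunit).mp h'

end Aux

/-- If the colimit of `A` along `θ` is a `ℤ[1/ℓ]`-module (`ℓ` acts invertibly on it)
and `θ[1/ℓ]` is an automorphism of `A[1/ℓ]`, then `colim_θ A ≅ A[1/ℓ]` under `A`. -/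
theorem colim_eq_loc_of_ell_invertible {A : Type} [AddCommGroup A] (ℓ : ℤ) (hℓ : 0 < ℓ)
    (θ : A →+ A)
    (hcolim : Function.Bijective (fun c : seqColim θ => ℓ • c))
    (ha : Function.Bijective (locMap ℓ θ)) :
    ∃ e : seqColim θ ≃+ loc ℓ A, ∀ a : A, e (seqColimOf θ a) = toLoc ℓ A a := by
  classical
  -- the automorphism `θ[1/ℓ]` of `loc ℓ A`
  set u : AddAut (loc ℓ A) := AddEquiv.ofBijective (locMap ℓ θ) ha with hu_def
  have hu : ∀ x, u x = locMap ℓ θ x := fun _ => rfl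
  -- powers of ℓ act bijectively on the colimit
  have hpow : ∀ k : ℕ, Function.Bijective (fun c : seqColim θ => (ℓ ^ k : ℤ) • c) := by
    intro k
    induction k with
    | zero => simp only [pow_zero, one_smul]; exact Function.bijective_id
    | succ n ih =>
        have : (fun c : seqColim θ => (ℓ ^ (n + 1) : ℤ) • c)
            = (fun c : seqColim θ => ℓ • c) ∘ (fun c => (ℓ ^ n : ℤ) • c) := by
          funext c
          show (ℓ ^ (n + 1) : ℤ) • c = ℓ • ((ℓ ^ n : ℤ) • c)
          rw [pow_succ', mul_smul]
        rw [this]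
        exact hcolim.comp ih
  -- the maps at each stage
  set φ : ∀ _ : ℕ, A →+ loc ℓ A :=
    fun n => ((n • -u : AddAut (loc ℓ A)) : loc ℓ A ≃+ loc ℓ A).toAddMonoidHom.comp
      (toLoc ℓ A) with hφ
  have key : ∀ (m : ℕ) (a : A),
      (m • -u : AddAut (loc ℓ A)) (toLoc ℓ A (((show AddMonoid.End A from θ) ^ m) a))
        = toLoc ℓ A a := by
    intro m
    induction m with
    | zero => intro a; simp; rfl
    | succ n ih =>
        intro a
        have h1 : ((show AddMonoid.End A from θ) ^ (n + 1)) a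
            = ((show AddMonoid.End A from θ) ^ n) (θ a) := by
          rw [pow_succ]; rfl
        rw [h1, succ_nsmul', AddAut.add_apply, ih (θ a)]
        have h2 : toLoc ℓ A (θ a) = u (toLoc ℓ A a) := (locMap_toLoc ℓ θ a).symm
        rw [h2, AddAut.neg_def]
        exact u.symm_apply_apply _
  have compat : ∀ (i j : ℕ) (hij : i ≤ j) (x : A),
      φ j (((show AddMonoid.End A from θ) ^ (j - i)) x) = φ i x := by
    intro i j hij x
    obtain ⟨m, rfl⟩ := Nat.exists_eq_add_of_le hij
    have hm : i + m - i = m := by omega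
    rw [hφ]
    simp only [AddMonoidHom.comp_apply, AddEquiv.coe_toAddMonoidHom, hm]
    rw [add_nsmul, AddAut.add_apply, key m x]
  -- the induced map out of the colimit
  set F : seqColim θ →+ loc ℓ A :=
    AddCommGroup.DirectLimit.lift _ _ _ φ compat with hF
  have F_of : ∀ (n : ℕ) (a : A),
      F (AddCommGroup.DirectLimit.of (fun _ : ℕ => A)
        (fun i j _ => @id (A →+ A) ((show AddMonoid.End A from θ) ^ (j - i))) n a)
        = (n • -u : AddAut (loc ℓ A)) (toLoc ℓ A a) := by
    intro n a
    rw [hF]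
    exact AddCommGroup.DirectLimit.lift_of (loc ℓ A) φ compat n a
  have Finj : Function.Injective F := by
    rw [injective_iff_map_eq_zero]
    intro z hz
    induction z using AddCommGroup.DirectLimit.induction_on with
    | ih n a =>
        rw [F_of] at hz
        have h0 : toLoc ℓ A a = 0 := by
          have := (n • -u : AddAut (loc ℓ A)).injective
            (a₁ := toLoc ℓ A a) (a₂ := 0) (by simpa using hz)
          simpa using this
        obtain ⟨k, hk⟩ := toLoc_eq_zero ℓ h0
        apply (hpow k).injective
        show (ℓ ^ k : ℤ) • _ = (ℓ ^ k : ℤ) • (0 : seqColim θ)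
        rw [smul_zero, ← map_zsmul, hk, map_zero]
  have Fsurj : Function.Surjective F := by
    intro y
    obtain ⟨k, a, hk⟩ := exists_pow_smul_eq_toLoc ℓ y
    obtain ⟨x, hx⟩ := (hpow k).surjective (seqColimOf θ a)
    refine ⟨x, pow_smul_injective_loc ℓ k ?_⟩
    have hx' : (ℓ ^ k : ℤ) • x = seqColimOf θ a := hx
    show (ℓ ^ k : ℤ) • F x = (ℓ ^ k : ℤ) • y
    rw [← map_zsmul F, hx', hk]
    rw [seqColimOf, F_of]; simp
  refine ⟨AddEquiv.ofBijective F ⟨Finj, Fsurj⟩, fun a => ?_⟩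
  show F (seqColimOf θ a) = toLoc ℓ A a
  rw [seqColimOf, F_of]; simp
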